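/- Let m,n be positive integers, γ ∈ [0,1)^m, and let A be an m×n real matrix such that for every decreasing ψ : ℕ → [0,∞) with ∑_{q≥1} q^{n-1} ψ(q)^m = ∞ there are infinitely many q ∈ ℤ^n with ⟨Aq − γ⟩ < ψ(‖q‖). Then A is γ-singular with exponent 1: for every ε > 0 and all sufficiently large T ∈ ℕ there exists q ∈ ℤ^n with 1 ≤ ‖q‖^n ≤ T and ⟨Aq − γ⟩^m < ε/T. -/

import Mathlib

open Filter

/-- The supremum norm of an integer vector, as a natural number. -/
def znn {n : ℕ} (q : Fin n → ℤ) : ℕ := Finset.univ.sup fun i => (q i).natAbs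

/-- Supremum-norm distance of `y ∈ ℝ^m` to the integer lattice `ℤ^m`. -/
noncomputable def dz {m : ℕ} (y : Fin m → ℝ) : ℝ := ⨅ p : Fin m → ℤ, ‖y - fun i => (p i : ℝ)‖

/-- `⟨Aq - γ⟩`, the approximation error. -/
noncomputable def approxErr {m n : ℕ} (A : Matrix (Fin m) (Fin n) ℝ) (γ : Fin m → ℝ)
    (q : Fin n → ℤ) : ℝ := dz (A.mulVec (fun i => (q i : ℝ)) - γ)

/-- `min_{q ∈ ℤ^n, l ≤ ‖q‖ ≤ t} ⟨Aq - γ⟩^m`. -/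
noncomputable def minErr {m n : ℕ} (A : Matrix (Fin m) (Fin n) ℝ) (γ : Fin m → ℝ)
    (l t : ℕ) : ℝ :=
  sInf {x | ∃ q : Fin n → ℤ, l ≤ znn q ∧ znn q ≤ t ∧ x = approxErr A γ q ^ m}

lemma dz_nonneg {m : ℕ} (y : Fin m → ℝ) : 0 ≤ dz y :=
  Real.iInf_nonneg fun _ => norm_nonneg _

lemma approxErr_nonneg {m n : ℕ} (A : Matrix (Fin m) (Fin n) ℝ) (γ : Fin m → ℝ)
    (q : Fin n → ℤ) : 0 ≤ approxErr A γ q := dz_nonneg _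

lemma finite_znn_le (n B : ℕ) : {q : Fin n → ℤ | znn q ≤ B}.Finite := by
  apply Set.Finite.subset (Set.Finite.pi (fun i : Fin n => Set.finite_Icc (-(B:ℤ)) B))
  intro q hq
  have hq' : (Finset.univ.sup fun j => (q j).natAbs) ≤ B := hq
  simp only [Set.mem_pi, Set.mem_univ, Set.mem_Icc, forall_true_left]
  intro i
  have h1 : (q i).natAbs ≤ B :=
    le_trans (Finset.le_sup (f := fun j => (q j).natAbs) (Finset.mem_univ i)) hq'
  omega

theorem omega_subset_sing (m n : ℕ) (hm : 0 < m) (hn : 0 < n)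
    (A : Matrix (Fin m) (Fin n) ℝ) (γ : Fin m → ℝ)
    (hγ : ∀ i, 0 ≤ γ i ∧ γ i < 1)
    (hΩ : ∀ ψ : ℕ → ℝ, Antitone ψ → (∀ q, 0 ≤ ψ q) →
        ¬ Summable (fun q : ℕ => (q : ℝ) ^ (n - 1) * ψ q ^ m) →
        {q : Fin n → ℤ | approxErr A γ q < ψ (znn q)}.Infinite) :
    ∀ ε : ℝ, 0 < ε → ∃ T₀ : ℕ, ∀ T : ℕ, T₀ ≤ T → ∃ q : Fin n → ℤ,
      1 ≤ znn q ∧ (znn q : ℝ) ^ n ≤ (T : ℝ) ∧ approxErr A γ q ^ m < ε / T := by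
  by_contra hcon
  push_neg at hcon
  obtain ⟨ε, hε, hsing⟩ := hcon
  -- Step 1: arbitrarily large L with uniform lower bound ε/(L+1)^n.
  have key : ∀ N : ℕ, ∃ L : ℕ, N ≤ L ∧ ∀ q : Fin n → ℤ, 1 ≤ znn q → znn q ≤ L →
      ε / ((L : ℝ) + 1) ^ n ≤ approxErr A γ q ^ m := by
    intro N
    obtain ⟨T, hT₀, hT⟩ := hsing ((N + 1) ^ n)
    set L := Nat.findGreatest (fun l => l ^ n ≤ T) T with hLdef
    have hP : (N + 1) ^ n ≤ T := hT₀
    have hN1T : N + 1 ≤ T := le_trans (Nat.le_self_pow hn.ne' _) hP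
    have hLge : N + 1 ≤ L := Nat.le_findGreatest (P := fun l => l ^ n ≤ T) hN1T hP
    have hLn : L ^ n ≤ T := Nat.findGreatest_spec (P := fun l => l ^ n ≤ T) hN1T hP
    have hTlt : T < (L + 1) ^ n := by
      by_contra h
      push_neg at h
      have h1 : L + 1 ≤ T := le_trans (Nat.le_self_pow hn.ne' _) h
      exact (Nat.findGreatest_is_greatest (P := fun l => l ^ n ≤ T) (Nat.lt_succ_self L) h1) h
    have hTpos : (0:ℝ) < T := by
      have : 0 < T := lt_of_lt_of_le (Nat.pow_pos (Nat.succ_pos N)) hP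
      exact_mod_cast this
    refine ⟨L, by omega, fun q h1 h2 => ?_⟩
    have hq : (znn q : ℝ) ^ n ≤ (T : ℝ) := by
      calc (znn q : ℝ) ^ n ≤ (L : ℝ) ^ n := by
            apply pow_le_pow_left₀ (by positivity)
            exact_mod_cast h2
        _ ≤ (T : ℝ) := by exact_mod_cast hLn
    have h3 := hT q h1 hq
    refine le_trans ?_ h3
    apply div_le_div_of_nonneg_left hε.le hTpos
    have : (T : ℝ) < ((L:ℝ) + 1) ^ n := by exact_mod_cast hTlt
    linarith
  -- Step 2: recursively pick an increasing sequence.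
  set Lf : ℕ → ℕ := fun k => Nat.rec (key 2).choose (fun _ prev => (key (2 * prev)).choose) k
    with hLf
  have hLf0 : 2 ≤ Lf 0 := (key 2).choose_spec.1
  have hLfs : ∀ k, 2 * Lf k ≤ Lf (k + 1) := fun k => (key (2 * Lf k)).choose_spec.1
  have hQ : ∀ k, ∀ q : Fin n → ℤ, 1 ≤ znn q → znn q ≤ Lf k →
      ε / ((Lf k : ℝ) + 1) ^ n ≤ approxErr A γ q ^ m := by
    intro k
    cases k with
    | zero => exact (key 2).choose_spec.2
    | succ k => exact (key (2 * Lf k)).choose_spec.2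
  have hLf2 : ∀ k, 2 ≤ Lf k := by
    intro k; induction k with
    | zero => exact hLf0
    | succ k ih => have := hLfs k; omega
  have hLfmono : Monotone Lf := monotone_nat_of_le_succ (fun k => by have := hLfs k; have := hLf2 k; omega)
  have hLfub : ∀ t : ℕ, ∃ k, t ≤ Lf k := by
    intro t
    refine ⟨t, ?_⟩
    induction t with
    | zero => omega
    | succ t ih => have := hLfs t; have h2 := hLf2 t; have := hLfmono (Nat.le_succ t); omega
  -- Step 3: define ψ.
  set K : ℕ → ℕ := fun t => Nat.find (hLfub t) with hK
  have hKle : ∀ t k, t ≤ Lf k → K t ≤ k := fun t k h => Nat.find_le h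
  have hKspec : ∀ t, t ≤ Lf (K t) := fun t => Nat.find_spec (hLfub t)
  have hKmono : Monotone K := fun t t' h => Nat.find_le (le_trans h (hKspec t'))
  set ψ : ℕ → ℝ := fun t => (ε / ((Lf (K t) : ℝ) + 1) ^ n) ^ ((m : ℝ)⁻¹) with hψ
  have hbase : ∀ k, 0 ≤ ε / ((Lf k : ℝ) + 1) ^ n := by
    intro k; positivity
  have hψpow : ∀ t, ψ t ^ m = ε / ((Lf (K t) : ℝ) + 1) ^ n := by
    intro t
    rw [hψ]
    rw [← Real.rpow_natCast ((ε / ((Lf (K t) : ℝ) + 1) ^ n) ^ ((m : ℝ)⁻¹)) m,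
      ← Real.rpow_mul (hbase _), inv_mul_cancel₀ (by exact_mod_cast hm.ne'), Real.rpow_one]
  have hψnonneg : ∀ t, 0 ≤ ψ t := fun t => Real.rpow_nonneg (hbase _) _
  have hψanti : Antitone ψ := by
    intro t t' h
    apply Real.rpow_le_rpow (hbase _) _ (by positivity)
    apply div_le_div_of_nonneg_left hε.le (by positivity)
    apply pow_le_pow_left₀ (by positivity)
    have h5 : (Lf (K t) : ℝ) ≤ Lf (K t') := Nat.cast_le.mpr (hLfmono (hKmono h))
    linarith
  -- block identification
  have hKblock : ∀ k t, Lf k < t → t ≤ Lf (k + 1) → K t = k + 1 := by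
    intro k t h1 h2
    have hle : K t ≤ k + 1 := hKle t _ h2
    have hgt : ¬ K t ≤ k := by
      intro h
      have := le_trans (hKspec t) (hLfmono h)
      omega
    omega
  -- Step 4: divergence.
  have hdiv : ¬ Summable (fun q : ℕ => (q : ℝ) ^ (n - 1) * ψ q ^ m) := by
    intro hs
    set f : ℕ → ℝ := fun q => (q : ℝ) ^ (n - 1) * ψ q ^ m with hf
    have hfnonneg : ∀ q, 0 ≤ f q := fun q => mul_nonneg (by positivity) (pow_nonneg (hψnonneg q) m)
    set c : ℝ := ε / 2 ^ (n + 1) with hc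
    have hcpos : 0 < c := by positivity
    -- each block sum is at least c
    have hblock : ∀ k : ℕ, c ≤ ∑ t ∈ Finset.Ioc (Lf k) (Lf (k + 1)), f t := by
      intro k
      set l := Lf (k + 1) with hl
      have hl4 : 4 ≤ l := by have := hLfs k; have := hLf2 k; omega
      have hsub : Finset.Ioc (l / 2) l ⊆ Finset.Ioc (Lf k) l := by
        apply Finset.Ioc_subset_Ioc_left
        have := hLfs k; omega
      have hstep : ∑ t ∈ Finset.Ioc (l / 2) l, f t ≤ ∑ t ∈ Finset.Ioc (Lf k) l, f t :=
        Finset.sum_le_sum_of_subset_of_nonneg hsub (fun t _ _ => hfnonneg t)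
      refine le_trans ?_ hstep
      have hbd : ∀ t ∈ Finset.Ioc (l / 2) l,
          (((l:ℝ) + 1) / 2) ^ (n - 1) * (ε / ((l:ℝ) + 1) ^ n) ≤ f t := by
        intro t ht
        simp only [Finset.mem_Ioc] at ht
        have hpk : 2 * Lf k ≤ l := hLfs k
        have hKt : K t = k + 1 := hKblock k t (by omega) ht.2
        have hfteq : f t = (t : ℝ) ^ (n - 1) * (ε / ((l:ℝ) + 1) ^ n) := by
          rw [hf]; simp only [hψpow t, hKt, hl]
        rw [hfteq]
        apply mul_le_mul_of_nonneg_right _ (hbase (k+1))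
        apply pow_le_pow_left₀ (by positivity)
        have h1 : l / 2 + 1 ≤ t := ht.1
        have h2 : l ≤ 2 * (l / 2) + 1 := by omega
        have h3 : ((l:ℝ) + 1) ≤ 2 * (t:ℝ) := by
          have : l + 1 ≤ 2 * t := by omega
          exact_mod_cast this
        linarith
      have hcard : ((l:ℝ) + 1) / 4 ≤ ((Finset.Ioc (l / 2) l).card : ℝ) := by
        rw [Nat.card_Ioc]
        have : l + 1 ≤ 4 * (l - l / 2) := by omega
        have h4 : ((l:ℝ) + 1) ≤ 4 * ((l - l / 2 : ℕ) : ℝ) := by exact_mod_cast this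
        linarith
      have hsum := Finset.card_nsmul_le_sum (Finset.Ioc (l / 2) l) f
        ((((l:ℝ) + 1) / 2) ^ (n - 1) * (ε / ((l:ℝ) + 1) ^ n)) hbd
      rw [nsmul_eq_mul] at hsum
      refine le_trans ?_ hsum
      have hterm_nonneg : 0 ≤ (((l:ℝ) + 1) / 2) ^ (n - 1) * (ε / ((l:ℝ) + 1) ^ n) := by positivity
      have hmm : ((l:ℝ) + 1) / 4 * ((((l:ℝ) + 1) / 2) ^ (n - 1) * (ε / ((l:ℝ) + 1) ^ n)) ≤
          ((Finset.Ioc (l / 2) l).card : ℝ) * ((((l:ℝ) + 1) / 2) ^ (n - 1) * (ε / ((l:ℝ) + 1) ^ n)) :=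
        mul_le_mul_of_nonneg_right hcard hterm_nonneg
      refine le_trans (le_of_eq ?_) hmm
      have hlpos : (0:ℝ) < (l:ℝ) + 1 := by positivity
      have hpown : ((l:ℝ) + 1) ^ n = ((l:ℝ) + 1) * ((l:ℝ) + 1) ^ (n - 1) := by
        rw [← pow_succ']
        congr 1
        omega
      rw [hc, hpown, div_pow]
      have h2n : (2:ℝ) ^ (n + 1) = 4 * 2 ^ (n - 1) := by
        rw [show n + 1 = (n - 1) + 2 by omega, pow_add]
        ring
      rw [h2n]
      field_simp
    -- telescoping to contradiction
    have htel : ∀ N : ℕ, (N : ℝ) * c ≤ ∑ t ∈ Finset.Ioc (Lf 0) (Lf N), f t := by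
      intro N
      induction N with
      | zero => simp
      | succ N ih =>
        have hcons : ∑ t ∈ Finset.Ioc (Lf 0) (Lf N), f t
            + ∑ t ∈ Finset.Ioc (Lf N) (Lf (N + 1)), f t
            = ∑ t ∈ Finset.Ioc (Lf 0) (Lf (N + 1)), f t :=
          Finset.sum_Ioc_consecutive f (hLfmono (Nat.zero_le N)) (hLfmono (Nat.le_succ N))
        push_cast
        rw [← hcons]
        have := hblock N
        linarith
    have hle : ∀ N : ℕ, (N : ℝ) * c ≤ ∑' t, f t := by
      intro N
      refine le_trans (htel N) (Summable.sum_le_tsum _ (fun t _ => hfnonneg t) hs)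
    obtain ⟨N, hN⟩ := exists_nat_gt ((∑' t, f t) / c)
    have := hle N
    rw [div_lt_iff₀ hcpos] at hN
    linarith
  -- Step 5: contradiction with infinitude.
  have hinf := hΩ ψ hψanti hψnonneg hdiv
  apply hinf
  apply Set.Finite.subset (finite_znn_le n (Lf 0))
  intro q hq
  simp only [Set.mem_setOf_eq] at hq ⊢
  by_contra hgt
  push_neg at hgt
  set t := znn q with ht
  have hKt1 : 1 ≤ K t := by
    rcases Nat.eq_zero_or_pos (K t) with h | h
    · have h2 := hKspec t; rw [h] at h2; omega
    · exact h
  have hlow : Lf (K t - 1) < t := by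
    by_contra h
    push_neg at h
    have := hKle t _ h
    omega
  have hup : t ≤ Lf (K t) := hKspec t
  have h1t : 1 ≤ t := by have := hLf2 0; omega
  have hQt := hQ (K t) q h1t hup
  rw [← hψpow t] at hQt
  have : approxErr A γ q ^ m < ψ t ^ m :=
    pow_lt_pow_left₀ hq (approxErr_nonneg A γ q) hm.ne'
  linarith
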